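/- If c = 3m, r''(c) = 0, and V has a finite limit at c (where V = −(2 r' A' + r A'')/(2r)), then necessarily r'''(c) = 0 and lim_{ρ→c⁺} V = −(3/2) lim_{ρ→c⁺} A''. -/

import Mathlib

open Filter

/-- If `c = 3m`, `r''(c) = 0`, and `V = −(2 r' A' + r A'')/(2r)` has a finite limit at `c`,
then necessarily `r'''(c) = 0` and `lim V = −(3/2) lim A''`. -/
theorem stmt8 (c m : ℝ) (hc : 0 < c) (hm : m = c / 3)
    (r r' r'' r''' : ℝ → ℝ)
    (hr : ∀ ρ ∈ Set.Ici c, HasDerivWithinAt r (r' ρ) (Set.Ici c) ρ)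
    (hr'd : ∀ ρ ∈ Set.Ici c, HasDerivWithinAt r' (r'' ρ) (Set.Ici c) ρ)
    (hr''d : ∀ ρ ∈ Set.Ici c, HasDerivWithinAt r'' (r''' ρ) (Set.Ici c) ρ)
    (hr''' : ContinuousOn r''' (Set.Ici c))
    (hr'gt : ∀ ρ ∈ Set.Ici c, 1 < r' ρ)
    (hrc : r c = 0) (hr''c : r'' c = 0)
    (hrpos : ∀ ρ ∈ Set.Ioi c, 0 < r ρ)
    (A A' A'' V : ℝ → ℝ)
    (hA : ∀ ρ ∈ Set.Ioi c, HasDerivAt A (A' ρ) ρ)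
    (hA' : ∀ ρ ∈ Set.Ioi c, HasDerivAt A' (A'' ρ) ρ)
    (hfield : ∀ ρ ∈ Set.Ioi c,
      r ρ * A'' ρ = 2 * A ρ * r'' ρ + 2 * (r' ρ ^ 2 * A ρ - 1) / r ρ)
    (hAc : Tendsto A (nhdsWithin c (Set.Ioi c)) (nhds (1 / r' c ^ 2)))
    (hA'c : Tendsto A' (nhdsWithin c (Set.Ioi c)) (nhds 0))
    (hV : ∀ ρ ∈ Set.Ioi c,
      V ρ = -(2 * r' ρ * A' ρ + r ρ * A'' ρ) / (2 * r ρ))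
    (L Vc : ℝ)
    (hL : Tendsto A'' (nhdsWithin c (Set.Ioi c)) (nhds L))
    (hVc : Tendsto V (nhdsWithin c (Set.Ioi c)) (nhds Vc)) :
    r''' c = 0 ∧ Vc = -(3 / 2) * L := by
  set a := r' c with ha_def
  have hmemc : c ∈ Set.Ici c := Set.self_mem_Ici
  have ha1 : 1 < a := hr'gt c hmemc
  have ha0 : a ≠ 0 := by linarith
  set K := r''' c with hK_def
  -- derivatives at interior points
  have hrI : ∀ ρ ∈ Set.Ioi c, HasDerivAt r (r' ρ) ρ := fun ρ hρ =>
    (hr ρ (Set.mem_Ici.2 (le_of_lt hρ))).hasDerivAt (Ici_mem_nhds hρ)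
  have hr'I : ∀ ρ ∈ Set.Ioi c, HasDerivAt r' (r'' ρ) ρ := fun ρ hρ =>
    (hr'd ρ (Set.mem_Ici.2 (le_of_lt hρ))).hasDerivAt (Ici_mem_nhds hρ)
  -- slope limits at c from the right
  have hIoi : Set.Ici c \ {c} = Set.Ioi c := Set.Ici_sdiff_left
  have hrslope : Tendsto (fun ρ => r ρ / (ρ - c)) (nhdsWithin c (Set.Ioi c)) (nhds a) := by
    have h := hasDerivWithinAt_iff_tendsto_slope.1 (hr c hmemc)
    rw [hIoi] at h
    refine h.congr' ?_
    filter_upwards [self_mem_nhdsWithin] with ρ hρ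
    simp [slope_def_field, hrc]
  have hr''slope : Tendsto (fun ρ => r'' ρ / (ρ - c)) (nhdsWithin c (Set.Ioi c)) (nhds K) := by
    have h := hasDerivWithinAt_iff_tendsto_slope.1 (hr''d c hmemc)
    rw [hIoi] at h
    refine h.congr' ?_
    filter_upwards [self_mem_nhdsWithin] with ρ hρ
    simp [slope_def_field, hr''c]
  have hsub : Tendsto (fun ρ : ℝ => ρ - c) (nhdsWithin c (Set.Ioi c)) (nhds 0) := by
    have h : Tendsto (fun ρ : ℝ => ρ - c) (nhds c) (nhds (c - c)) :=
      (continuous_id.sub continuous_const).tendsto c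
    simpa using h.mono_left nhdsWithin_le_nhds
  have hne : ∀ᶠ ρ in nhdsWithin c (Set.Ioi c), ρ ∈ Set.Ioi c := self_mem_nhdsWithin
  -- L'Hopital: A' ρ / (ρ - c) → L
  have hA'slope : Tendsto (fun ρ => A' ρ / (ρ - c)) (nhdsWithin c (Set.Ioi c)) (nhds L) := by
    apply HasDerivAt.lhopital_zero_nhdsGT (f' := A'') (g' := fun _ => (1:ℝ))
      (hne.mono fun ρ hρ => hA' ρ hρ)
      (hne.mono fun ρ _ => ((hasDerivAt_id ρ).sub_const c))
      (hne.mono fun ρ _ => one_ne_zero)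
      hA'c hsub
    simpa using hL
  -- r' → a along Ioi
  have hr'lim : Tendsto r' (nhdsWithin c (Set.Ioi c)) (nhds a) :=
    ((hr'd c hmemc).continuousWithinAt).mono Set.Ioi_subset_Ici_self
  -- V limit
  have hA'r : Tendsto (fun ρ => A' ρ / r ρ) (nhdsWithin c (Set.Ioi c)) (nhds (L / a)) := by
    have h := hA'slope.div hrslope ha0
    refine h.congr' ?_
    filter_upwards [hne] with ρ hρ
    have h1 : ρ - c ≠ 0 := sub_ne_zero.2 (ne_of_gt hρ)
    rw [Pi.div_apply, div_div_div_cancel_right₀ h1]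
  have hVlim : Tendsto V (nhdsWithin c (Set.Ioi c)) (nhds (-(3/2) * L)) := by
    have h : Tendsto (fun ρ => -(2 * r' ρ * (A' ρ / r ρ) + A'' ρ) / 2)
        (nhdsWithin c (Set.Ioi c)) (nhds (-(2 * a * (L / a) + L) / 2)) :=
      (((((tendsto_const_nhds.mul hr'lim).mul hA'r).add hL).neg).div_const 2)
    have hLa : a * (L / a) = L := by
      rw [← mul_div_assoc]; exact mul_div_cancel_left₀ L ha0
    have heq : -(2 * a * (L / a) + L) / 2 = -(3/2) * L := by
      rw [mul_assoc, hLa]; ring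
    rw [heq] at h
    refine h.congr' ?_
    filter_upwards [hne] with ρ hρ
    have hr0 : r ρ ≠ 0 := (hrpos ρ hρ).ne'
    rw [hV ρ hρ]
    field_simp
  have hVc_eq : Vc = -(3/2) * L := tendsto_nhds_unique hVc hVlim
  -- now prove K = 0
  set A₀ : ℝ := 1 / a ^ 2 with hA₀
  have hA₀0 : A₀ ≠ 0 := by rw [hA₀]; positivity
  set f : ℝ → ℝ := fun ρ => r' ρ ^ 2 * A ρ - 1 with hf_def
  have hf0 : Tendsto f (nhdsWithin c (Set.Ioi c)) (nhds 0) := by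
    have h : Tendsto f (nhdsWithin c (Set.Ioi c)) (nhds (a ^ 2 * A₀ - 1)) :=
      ((hr'lim.pow 2).mul hAc).sub_const 1
    have he : a ^ 2 * A₀ - 1 = 0 := by
      rw [hA₀, mul_one_div, div_self (pow_ne_zero 2 ha0), sub_self]
    rwa [he] at h
  set f' : ℝ → ℝ := fun ρ => 2 * r' ρ * r'' ρ * A ρ + r' ρ ^ 2 * A' ρ with hf'_def
  have hfderiv : ∀ ρ ∈ Set.Ioi c, HasDerivAt f (f' ρ) ρ := by
    intro ρ hρ
    have h1 : HasDerivAt (fun x => r' x ^ 2) (2 * r' ρ * r'' ρ) ρ := by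
      have := (hr'I ρ hρ).fun_pow 2
      simpa [mul_comm, mul_assoc, mul_left_comm] using this
    have h2 := (h1.mul (hA ρ hρ)).sub_const 1
    exact h2
  -- limit of f'/(2(ρ-c))
  have hf'slope : Tendsto (fun ρ => f' ρ / (2 * (ρ - c))) (nhdsWithin c (Set.Ioi c))
      (nhds ((2 * a * K * A₀ + a ^ 2 * L) / 2)) := by
    have h : Tendsto (fun ρ => (2 * r' ρ * (r'' ρ / (ρ - c)) * A ρ + r' ρ ^ 2 * (A' ρ / (ρ - c))) / 2)
        (nhdsWithin c (Set.Ioi c)) (nhds ((2 * a * K * A₀ + a ^ 2 * L) / 2)) :=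
      ((((tendsto_const_nhds.mul hr'lim).mul hr''slope).mul hAc).add
        ((hr'lim.pow 2).mul hA'slope)).div_const 2
    refine h.congr' ?_
    filter_upwards [hne] with ρ hρ
    show _ = f' ρ / (2 * (ρ - c))
    rw [hf'_def]
    simp only [div_eq_mul_inv, mul_inv]
    ring
  -- L'Hopital: f/(ρ-c)^2
  have hfslope : Tendsto (fun ρ => f ρ / (ρ - c) ^ 2) (nhdsWithin c (Set.Ioi c))
      (nhds ((2 * a * K * A₀ + a ^ 2 * L) / 2)) := by
    apply HasDerivAt.lhopital_zero_nhdsGT (f' := f')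
      (g' := fun ρ => 2 * (ρ - c))
      (hne.mono fun ρ hρ => hfderiv ρ hρ)
      (hne.mono fun ρ _ => by
        have h := ((hasDerivAt_id ρ).sub_const c).fun_pow 2
        simpa [mul_comm, mul_assoc, mul_left_comm] using h)
      (hne.mono fun ρ hρ => by
        have hcρ : c < ρ := hρ
        have : (0:ℝ) < 2 * (ρ - c) := by linarith
        exact this.ne')
      hf0 (by simpa using hsub.pow 2)
    exact hf'slope
  -- from the field equation
  have hfslope2 : Tendsto (fun ρ => f ρ / (ρ - c) ^ 2) (nhdsWithin c (Set.Ioi c))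
      (nhds (a * (a * L - 2 * A₀ * K) / 2)) := by
    have h : Tendsto (fun ρ => (r ρ / (ρ - c)) * ((r ρ / (ρ - c)) * A'' ρ - 2 * A ρ * (r'' ρ / (ρ - c))) / 2)
        (nhdsWithin c (Set.Ioi c)) (nhds (a * (a * L - 2 * A₀ * K) / 2)) :=
      (hrslope.mul ((hrslope.mul hL).sub
        ((tendsto_const_nhds.mul hAc).mul hr''slope))).div_const 2
    refine h.congr' ?_
    filter_upwards [hne] with ρ hρ
    have hr0 : r ρ ≠ 0 := (hrpos ρ hρ).ne'
    have hfe := hfield ρ hρ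
    have h3 : (r ρ * A'' ρ - 2 * A ρ * r'' ρ) * r ρ = 2 * (r' ρ ^ 2 * A ρ - 1) := by
      rw [show r ρ * A'' ρ - 2 * A ρ * r'' ρ = 2 * (r' ρ ^ 2 * A ρ - 1) / r ρ from by
        linarith [hfe]]
      exact div_mul_cancel₀ _ hr0
    have hfρ : f ρ = (r ρ * A'' ρ - 2 * A ρ * r'' ρ) * r ρ / 2 := by
      show r' ρ ^ 2 * A ρ - 1 = _
      rw [h3]; ring
    show _ = f ρ / (ρ - c) ^ 2
    rw [hfρ, pow_two]
    simp only [div_eq_mul_inv, mul_inv]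
    ring
  have hkey := tendsto_nhds_unique hfslope hfslope2
  have hK0 : K = 0 := by
    have h4 : 4 * (a * A₀) * K = 0 := by linear_combination 2 * hkey
    have hprod : a * A₀ ≠ 0 := mul_ne_zero ha0 hA₀0
    have h5 : (4 * (a * A₀)) ≠ 0 := by
      exact mul_ne_zero (by norm_num) hprod
    exact (mul_eq_zero.1 h4).resolve_left h5
  exact ⟨hK0, hVc_eq⟩
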